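/- Let X be a real Banach space and J a closed subspace of X. If the pair (X, J) has the quotient lifting property (QLP), then J is proximinal in X: for every x ∈ X there exists j ∈ J with ‖x − j‖ = dist(x, J). -/

import Mathlib

/-- If the pair `(X, J)` has the quotient lifting property (QLP),
then `J` is proximinal in `X`. -/
theorem qlp_implies_proximinal
    {X : Type*} [NormedAddCommGroup X] [NormedSpace ℝ X] [CompleteSpace X]
    (J : Submodule ℝ X) (hJ : IsClosed (J : Set X))
    (hQLP : ∀ (Y : Type*) [NormedAddCommGroup Y] [NormedSpace ℝ Y] [CompleteSpace Y]
      (S : Y →L[ℝ] X ⧸ J), ∃ T : Y →L[ℝ] X, (∀ y, J.mkQ (T y) = S y) ∧ ‖T‖ = ‖S‖) :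
    ∀ x : X, ∃ j ∈ J, ‖x - j‖ = Metric.infDist x (J : Set X) := by
  intro x
  set e : ULift.{_, 0} ℝ ≃ₗᵢ[ℝ] ℝ := LinearIsometryEquiv.ulift ℝ ℝ with he
  set S := (ContinuousLinearMap.toSpanSingleton ℝ (J.mkQ x)).comp
    e.toLinearIsometry.toContinuousLinearMap with hS
  obtain ⟨T, hT, hTn⟩ := hQLP (ULift ℝ) S
  have hSn : ‖S‖ = ‖J.mkQ x‖ := by
    rw [hS]
    change ‖(ContinuousLinearMap.toSpanSingleton ℝ (J.mkQ x)).comp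
      ((e : ULift ℝ ≃L[ℝ] ℝ) : ULift ℝ →L[ℝ] ℝ)‖ = _
    rw [ContinuousLinearMap.opNorm_comp_linearIsometryEquiv,
      ContinuousLinearMap.norm_toSpanSingleton]
  have hS1 : S (ULift.up 1) = J.mkQ x := by
    simp only [hS, ContinuousLinearMap.coe_comp', Function.comp_apply,
      ContinuousLinearMap.toSpanSingleton_apply]
    exact one_smul ℝ _
  have h1 : J.mkQ (T (ULift.up 1)) = J.mkQ x := by rw [hT, hS1]
  have hmem : x - T (ULift.up 1) ∈ J := by
    have h0 : J.mkQ (x - T (ULift.up 1)) = 0 := by rw [map_sub, h1, sub_self]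
    rwa [Submodule.mkQ_apply, Submodule.Quotient.mk_eq_zero] at h0
  refine ⟨x - T (ULift.up 1), hmem, ?_⟩
  simp only [sub_sub_cancel]
  have hle : ‖T (ULift.up 1)‖ ≤ Metric.infDist x (J : Set X) := by
    have hb := T.le_opNorm (ULift.up 1)
    simp only [ULift.norm_def, ULift.up_down, norm_one, mul_one] at hb
    calc ‖T (ULift.up 1)‖ ≤ ‖T‖ := hb
      _ = ‖J.mkQ x‖ := by rw [hTn, hSn]
      _ = Metric.infDist x (J : Set X) := QuotientAddGroup.norm_mk x
  have hge : Metric.infDist x (J : Set X) ≤ ‖T (ULift.up 1)‖ := by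
    calc Metric.infDist x (J : Set X) ≤ dist x (x - T (ULift.up 1)) :=
          Metric.infDist_le_dist_of_mem hmem
      _ = ‖T (ULift.up 1)‖ := by rw [dist_eq_norm]; simp
  linarith
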